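/- Let A ∈ {ℤ, ℝ} and let K, X ⊆ ℝ^d be d-dimensional convex bodies (convex bodies whose affine hull is all of ℝ^d). If K does not contain an A-unimodular copy of X, then there exists ε > 0 such that the Minkowski sum K + εB^d (where B^d is the closed Euclidean unit ball) does not contain an A-unimodular copy of X. -/

import Mathlib

open Set Pointwise

noncomputable section

/-- The set of real numbers that are integers (the ring ℤ viewed inside ℝ). -/
def ZSet : Set ℝ := Set.range (fun z : ℤ => (z : ℝ))

/-- `T : ℝ^d → ℝ^d` is an affine `A`-unimodular transformation: `T x = M x + b` with
`M` an integer matrix of determinant `±1` and `b ∈ A^d`. -/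
def IsUnimodularMap {d : ℕ} (A : Set ℝ) (T : (Fin d → ℝ) → (Fin d → ℝ)) : Prop :=
  ∃ (M : Matrix (Fin d) (Fin d) ℤ) (b : Fin d → ℝ),
    (M.det = 1 ∨ M.det = -1) ∧ (∀ i, b i ∈ A) ∧
    ∀ x, T x = (M.map (fun z : ℤ => (z : ℝ))).mulVec x + b

/-- `Y` is an `A`-unimodular copy of `X`. -/
def IsUnimodCopy {d : ℕ} (A : Set ℝ) (X Y : Set (Fin d → ℝ)) : Prop :=
  ∃ T, IsUnimodularMap A T ∧ Y = T '' X

/-- `K` contains an `A`-unimodular copy of `X`. -/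
def ContainsCopy {d : ℕ} (A : Set ℝ) (X K : Set (Fin d → ℝ)) : Prop :=
  ∃ Y, IsUnimodCopy A X Y ∧ Y ⊆ K

/-- `K` is `A`-`X`-free: its relative interior contains no `A`-unimodular copy of `X`. -/
def IsFree {d : ℕ} (A : Set ℝ) (X K : Set (Fin d → ℝ)) : Prop :=
  ∀ Y, IsUnimodCopy A X Y → ¬ Y ⊆ intrinsicInterior ℝ K

/-- A convex body: a nonempty compact convex set. -/
def IsConvexBody {d : ℕ} (K : Set (Fin d → ℝ)) : Prop :=
  Convex ℝ K ∧ IsCompact K ∧ K.Nonempty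

/-- A polytope: the convex hull of a finite set of points. -/
def IsPolytope {d : ℕ} (K : Set (Fin d → ℝ)) : Prop :=
  ∃ F : Set (Fin d → ℝ), F.Finite ∧ K = convexHull ℝ F

/-- The width of `K` along the integer linear functional `u`. -/
def widthAlong {d : ℕ} (u : Fin d → ℤ) (K : Set (Fin d → ℝ)) : ℝ :=
  sSup {w | ∃ x ∈ K, ∃ y ∈ K, w = |(∑ i, (u i : ℝ) * x i) - ∑ i, (u i : ℝ) * y i|}

/-- The lattice width of `K`: the infimum of its widths along nonzero integer functionals. -/
def latticeWidth {d : ℕ} (K : Set (Fin d → ℝ)) : ℝ :=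
  sInf {w | ∃ u : Fin d → ℤ, u ≠ 0 ∧ w = widthAlong u K}

/-- The generalised flatness constant `Flt_d^A(X)`: the supremum of the lattice widths of all
convex bodies containing no `A`-unimodular copy of `X`. -/
def Flt (d : ℕ) (A : Set ℝ) (X : Set (Fin d → ℝ)) : ℝ :=
  sSup {w | ∃ K : Set (Fin d → ℝ), IsConvexBody K ∧ ¬ ContainsCopy A X K ∧ w = latticeWidth K}

/-- The affine dimension of a set: the dimension of the direction of its affine span. -/
def affDim {d : ℕ} (s : Set (Fin d → ℝ)) : ℕ :=
  Module.finrank ℝ (affineSpan ℝ s).direction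

/-- Minkowski difference `K ÷ S = {x | S + x ⊆ K}`. -/
def mDiff {d : ℕ} (K S : Set (Fin d → ℝ)) : Set (Fin d → ℝ) :=
  {x | ∀ s ∈ S, s + x ∈ K}

/-- The standard triangle `Δ₂ = conv{(0,0), (1,0), (0,1)} ⊆ ℝ²`. -/
def stdSimplex2 : Set (Fin 2 → ℝ) := convexHull ℝ {![0, 0], ![1, 0], ![0, 1]}

/-- The closed Euclidean unit ball in `ℝ^d`. -/
def euclBall (d : ℕ) : Set (Fin d → ℝ) := {x | ∑ i, x i ^ 2 ≤ 1}

lemma aux_eucl_norm {d : ℕ} {x : Fin d → ℝ} (hx : x ∈ euclBall d) : ‖x‖ ≤ 1 := by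
  rw [pi_norm_le_iff_of_nonneg zero_le_one]
  intro i
  rw [Real.norm_eq_abs, ← sq_le_one_iff_abs_le_one]
  exact le_trans (Finset.single_le_sum (f := fun j => x j ^ 2)
    (fun j _ => sq_nonneg _) (Finset.mem_univ i)) hx

open Filter in
lemma aux_int_eventually_const {a : ℕ → ℤ} {L : ℝ}
    (h : Tendsto (fun n => (a n : ℝ)) atTop (nhds L)) :
    ∃ N, ∀ n ≥ N, a n = a N := by
  have hc := h.cauchySeq
  rw [Metric.cauchySeq_iff'] at hc
  obtain ⟨N, hN⟩ := hc (1/2) (by norm_num)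
  refine ⟨N, fun n hn => ?_⟩
  have h1 := hN n hn
  rw [Real.dist_eq] at h1
  have h2 : |((a n - a N : ℤ) : ℝ)| < 1 := by push_cast; rw [abs_sub_comm] at h1 ⊢; linarith
  have h3 : |a n - a N| < 1 := by exact_mod_cast h2
  have h4 := abs_lt.mp h3
  omega

set_option maxHeartbeats 2000000 in
open Filter Metric Bornology in
/-- If a full-dimensional convex body `K` does not contain an `A`-unimodular copy of the
full-dimensional convex body `X`, then neither does `K + ε B^d` for some `ε > 0`. -/
theorem exists_eps_enlargement_not_containsCopy (d : ℕ) (A : Set ℝ)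
    (hA : A = ZSet ∨ A = Set.univ) (K X : Set (Fin d → ℝ))
    (hK : IsConvexBody K) (hKfull : affineSpan ℝ K = ⊤)
    (hX : IsConvexBody X) (hXfull : affineSpan ℝ X = ⊤)
    (h : ¬ ContainsCopy A X K) :
    ∃ ε : ℝ, 0 < ε ∧ ¬ ContainsCopy A X (K + ε • euclBall d) := by
  by_contra hcon
  push_neg at hcon
  -- an interior point of X together with a closed ball inside X
  have hXint : (interior X).Nonempty :=
    (hX.1.interior_nonempty_iff_affineSpan_eq_top).mpr hXfull
  obtain ⟨z, hz⟩ := hXint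
  obtain ⟨ρ0, hρ0, hball⟩ := Metric.isOpen_iff.mp isOpen_interior z hz
  set ρ : ℝ := ρ0 / 2 with hρdef
  have hρ : 0 < ρ := by positivity
  have hballX : ∀ w, w ∈ closedBall z ρ → w ∈ X := by
    intro w hw
    exact interior_subset (hball (lt_of_le_of_lt (mem_closedBall.mp hw) (by simp [hρdef]; linarith)))
  have hzX : z ∈ X := interior_subset hz
  -- bound for K
  obtain ⟨RK, hRK⟩ := hK.2.1.isBounded.subset_closedBall 0
  set R : ℝ := max RK 0 + 1 with hRdef
  have hR : (0:ℝ) < R := by positivity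
  -- extract the sequence of unimodular maps
  have key : ∀ n : ℕ, ∃ (M : Matrix (Fin d) (Fin d) ℤ) (b : Fin d → ℝ),
      (M.det = 1 ∨ M.det = -1) ∧ (∀ i, b i ∈ A) ∧
      ∀ x ∈ X, (M.map (fun z : ℤ => (z : ℝ))).mulVec x + b
        ∈ K + (1/((n:ℝ)+1)) • euclBall d := by
    intro n
    obtain ⟨Y, ⟨T, ⟨M, b, hdet, hbA, hT⟩, rfl⟩, hsub⟩ := hcon (1/((n:ℝ)+1)) (by positivity)
    exact ⟨M, b, hdet, hbA, fun x hx => by rw [← hT x]; exact hsub ⟨x, hx, rfl⟩⟩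
  choose M b hdet hbA hmem using key
  set Mc : ℕ → Matrix (Fin d) (Fin d) ℝ := fun n => (M n).map (fun z : ℤ => (z : ℝ)) with hMc
  -- pointwise norm bound
  have hptR : ∀ n, ∀ x ∈ X, ‖(Mc n).mulVec x + b n‖ ≤ R := by
    intro n x hx
    obtain ⟨k, hk, s, hs, hks⟩ := Set.mem_add.mp (hmem n x hx)
    obtain ⟨v, hv, rfl⟩ := hs
    rw [← hks]
    have h1 : ‖k‖ ≤ max RK 0 := le_max_of_le_left (by
      have := hRK hk; rwa [Metric.mem_closedBall, dist_zero_right] at this)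
    have h2 : ‖(1/((n:ℝ)+1)) • v‖ ≤ 1 := by
      rw [norm_smul, Real.norm_eq_abs]
      have hv1 : ‖v‖ ≤ 1 := aux_eucl_norm hv
      have he : |1/((n:ℝ)+1)| ≤ 1 := by
        rw [abs_of_pos (by positivity)]
        rw [div_le_one (by positivity)]
        linarith [Nat.cast_nonneg (α := ℝ) n]
      calc |1/((n:ℝ)+1)| * ‖v‖ ≤ 1 * 1 :=
        mul_le_mul he hv1 (norm_nonneg _) zero_le_one
      _ = 1 := by ring
    have h3 := norm_add_le k ((1/((n:ℝ)+1)) • v)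
    rw [hRdef]
    linarith
  -- entry bound
  set C : ℝ := 2 * R / ρ with hCdef
  have hC : 0 < C := by positivity
  have hMbound : ∀ n i j, |Mc n i j| ≤ C := by
    intro n i j
    have h1 : z + Pi.single j ρ ∈ X := by
      apply hballX
      rw [Metric.mem_closedBall, dist_self_add_left, Pi.norm_single, Real.norm_eq_abs,
        abs_of_pos hρ]
    have h2 := hptR n _ h1
    have h3 := hptR n z hzX
    have hdiff : ((Mc n).mulVec (z + Pi.single j ρ) + b n) - ((Mc n).mulVec z + b n)
        = (Mc n).mulVec (Pi.single j ρ) := by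
      rw [Matrix.mulVec_add]; abel
    have h4 : ‖(Mc n).mulVec (Pi.single j ρ)‖ ≤ 2 * R := by
      rw [← hdiff]
      have := norm_sub_le ((Mc n).mulVec (z + Pi.single j ρ) + b n) ((Mc n).mulVec z + b n)
      linarith
    have h5 : |Mc n i j * ρ| ≤ 2 * R := by
      have h6 := (norm_le_pi_norm ((Mc n).mulVec (Pi.single j ρ)) i).trans h4
      have h7 : (Mc n).mulVec (Pi.single j ρ) i = Mc n i j * ρ := by
        rw [Matrix.mulVec_single]; simp [op_smul_eq_mul]
      rw [h7, Real.norm_eq_abs] at h6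
      exact h6
    rw [abs_mul, abs_of_pos hρ] at h5
    rw [hCdef, le_div_iff₀ hρ]
    exact h5
  -- bound on mulVec
  have hmv : ∀ n (v : Fin d → ℝ), ‖(Mc n).mulVec v‖ ≤ (d:ℝ) * C * ‖v‖ := by
    intro n v
    have hnn : (0:ℝ) ≤ (d:ℝ) * C * ‖v‖ := by positivity
    rw [pi_norm_le_iff_of_nonneg hnn]
    intro i
    rw [Real.norm_eq_abs]
    calc |(Mc n).mulVec v i| = |∑ j, Mc n i j * v j| := by
          simp [Matrix.mulVec, dotProduct]
    _ ≤ ∑ j, |Mc n i j * v j| := Finset.abs_sum_le_sum_abs _ _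
    _ ≤ ∑ _j : Fin d, C * ‖v‖ := by
          apply Finset.sum_le_sum
          intro j _
          rw [abs_mul]
          exact mul_le_mul (hMbound n i j) (norm_le_pi_norm v j) (abs_nonneg _) hC.le
    _ = (d:ℝ) * (C * ‖v‖) := by simp [Finset.sum_const, mul_comm]
    _ = (d:ℝ) * C * ‖v‖ := by ring
  -- bound on b
  set Rb : ℝ := R + (d:ℝ) * C * ‖z‖ with hRb
  have hbbound : ∀ n, ‖b n‖ ≤ Rb := by
    intro n
    have : b n = ((Mc n).mulVec z + b n) - (Mc n).mulVec z := by abel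
    rw [this]
    have ha := norm_sub_le ((Mc n).mulVec z + b n) ((Mc n).mulVec z)
    have hb := hptR n z hzX
    have hc := hmv n z
    rw [hRb]
    linarith
  -- compactness: extract a convergent subsequence of the pair (matrix, translation)
  set p : ℕ → (Fin d → Fin d → ℝ) × (Fin d → ℝ) := fun n => (fun i j => Mc n i j, b n) with hp
  have hbdd : IsBounded ((closedBall (0 : Fin d → Fin d → ℝ) C) ×ˢ
      (closedBall (0 : Fin d → ℝ) Rb)) :=
    (isBounded_closedBall).prod (isBounded_closedBall)
  have hpmem : ∀ n, p n ∈ (closedBall (0 : Fin d → Fin d → ℝ) C) ×ˢ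
      (closedBall (0 : Fin d → ℝ) Rb) := by
    intro n
    constructor
    · rw [Metric.mem_closedBall, dist_zero_right, pi_norm_le_iff_of_nonneg hC.le]
      intro i
      rw [pi_norm_le_iff_of_nonneg hC.le]
      intro j
      rw [Real.norm_eq_abs]
      exact hMbound n i j
    · rw [Metric.mem_closedBall, dist_zero_right]
      exact hbbound n
  obtain ⟨⟨Ml, bl⟩, -, φ, hφ, htend⟩ := tendsto_subseq_of_bounded hbdd hpmem
  have hMt : Filter.Tendsto (fun n => (p (φ n)).1) atTop (nhds Ml) :=
    (continuous_fst.tendsto _).comp htend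
  have hbt : Filter.Tendsto (fun n => b (φ n)) atTop (nhds bl) :=
    (continuous_snd.tendsto _).comp htend
  -- the integer matrices are eventually constant along the subsequence
  have hij : ∀ q : Fin d × Fin d,
      Filter.Tendsto (fun n => ((M (φ n) q.1 q.2 : ℤ) : ℝ)) atTop (nhds (Ml q.1 q.2)) := by
    intro q
    have h1 := (tendsto_pi_nhds.mp hMt) q.1
    have h2 := (tendsto_pi_nhds.mp h1) q.2
    exact h2
  choose N hN using fun q : Fin d × Fin d => aux_int_eventually_const (hij q)
  set N₀ : ℕ := Finset.univ.sup N with hN₀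
  have hMconst : ∀ n ≥ N₀, M (φ n) = M (φ N₀) := by
    intro n hn
    ext i j
    have hle : N (i, j) ≤ N₀ := Finset.le_sup (Finset.mem_univ (i, j))
    exact (hN (i, j) n (le_trans hle hn)).trans (hN (i, j) N₀ hle).symm
  set Minf := M (φ N₀) with hMinf
  -- the limit translation lies in A^d
  have hAc : IsClosed A := by
    rcases hA with rfl | rfl
    · exact Int.isClosedEmbedding_coe_real.isClosed_range
    · exact isClosed_univ
  have hblA : ∀ i, bl i ∈ A := by
    intro i
    exact hAc.mem_of_tendsto ((tendsto_pi_nhds.mp hbt) i)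
      (Filter.Eventually.of_forall fun n => hbA (φ n) i)
  -- the limiting map gives a copy of X inside K
  apply h
  refine ⟨(fun x => (Minf.map (fun z : ℤ => (z : ℝ))).mulVec x + bl) '' X,
    ⟨_, ⟨Minf, bl, hdet (φ N₀), hblA, fun x => rfl⟩, rfl⟩, ?_⟩
  rintro y ⟨x, hx, rfl⟩
  set Tx := (Minf.map (fun z : ℤ => (z : ℝ))).mulVec x + bl with hTx
  have hyt : Filter.Tendsto (fun n => (Minf.map (fun z : ℤ => (z : ℝ))).mulVec x + b (φ n))
      atTop (nhds Tx) := tendsto_const_nhds.add hbt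
  have hid : Filter.Tendsto
      (fun n => infDist ((Minf.map (fun z : ℤ => (z : ℝ))).mulVec x + b (φ n)) K)
      atTop (nhds (infDist Tx K)) :=
    ((continuous_infDist_pt K).tendsto _).comp hyt
  have hle : ∀ᶠ n in atTop,
      infDist ((Minf.map (fun z : ℤ => (z : ℝ))).mulVec x + b (φ n)) K
        ≤ 1 / ((φ n : ℝ) + 1) := by
    filter_upwards [eventually_ge_atTop N₀] with n hn
    have hmm := hmem (φ n) x hx
    rw [hMconst n hn] at hmm
    obtain ⟨k, hk, s, hs, hks⟩ := Set.mem_add.mp hmm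
    obtain ⟨v, hv, rfl⟩ := hs
    calc infDist ((Minf.map (fun z : ℤ => (z : ℝ))).mulVec x + b (φ n)) K
        ≤ dist ((Minf.map (fun z : ℤ => (z : ℝ))).mulVec x + b (φ n)) k :=
          infDist_le_dist_of_mem hk
    _ = ‖(1/((φ n : ℝ)+1)) • v‖ := by
        rw [dist_eq_norm, ← hks]
        congr 1
        abel
    _ ≤ 1 / ((φ n : ℝ) + 1) := by
        rw [norm_smul, Real.norm_eq_abs, abs_of_pos (by positivity)]
        calc (1/((φ n : ℝ)+1)) * ‖v‖ ≤ (1/((φ n : ℝ)+1)) * 1 :=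
          mul_le_mul_of_nonneg_left (aux_eucl_norm hv) (by positivity)
        _ = 1 / ((φ n : ℝ) + 1) := by ring
  have hε : Filter.Tendsto (fun n => 1 / ((φ n : ℝ) + 1)) atTop (nhds 0) :=
    tendsto_one_div_add_atTop_nhds_zero_nat.comp hφ.tendsto_atTop
  have h0 : infDist Tx K ≤ 0 := le_of_tendsto_of_tendsto hid hε hle
  have := (hK.2.1.isClosed.mem_iff_infDist_zero hK.2.2).mpr
    (le_antisymm h0 infDist_nonneg)
  exact this
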